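/- Let G be a finite twin-free simple graph admitting an identifying code, and let γ_id(G) be the minimum cardinality of an identifying code of G. Then χ_rlid(G) ≤ γ_id(G) + 1. -/
import Mathlib


open SimpleGraph Set

variable {V : Type*}

/-- The closed neighborhood of a vertex. -/
def closedNbhd (G : SimpleGraph V) (v : V) : Set V := insert v (G.neighborSet v)

/-- A (not necessarily proper) coloring `c : V → Fin k` is a relaxed locally identifying coloring
(rlid-coloring) if any two adjacent vertices with distinct closed neighborhoods receive distinct
sets of colors on their closed neighborhoods. -/
def IsRlidColoring (G : SimpleGraph V) {k : ℕ} (c : V → Fin k) : Prop :=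
  ∀ u v : V, G.Adj u v → closedNbhd G u ≠ closedNbhd G v →
    c '' closedNbhd G u ≠ c '' closedNbhd G v

/-- The relaxed locally identifying chromatic number: the least `k` such that `G` admits an
rlid-coloring with `k` colors. -/
noncomputable def rlidChromNum (G : SimpleGraph V) : ℕ :=
  sInf {k : ℕ | ∃ c : V → Fin k, IsRlidColoring G c}

/-- A graph is twin-free if distinct vertices have distinct closed neighborhoods. -/
def TwinFree (G : SimpleGraph V) : Prop :=
  ∀ u v : V, closedNbhd G u = closedNbhd G v → u = v

/-- `C` is an identifying code of `G`: it is dominating (`N[v] ∩ C ≠ ∅` for all `v`) and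
separating (`N[u] ∩ C ≠ N[v] ∩ C` for all `u ≠ v`). -/
def IsIdCode (G : SimpleGraph V) (C : Set V) : Prop :=
  (∀ v : V, (closedNbhd G v ∩ C).Nonempty) ∧
  (∀ u v : V, u ≠ v → closedNbhd G u ∩ C ≠ closedNbhd G v ∩ C)

/-- `γ_id(G)`: the minimum cardinality of an identifying code of `G`. -/
noncomputable def idCodeNum (G : SimpleGraph V) : ℕ :=
  sInf {n : ℕ | ∃ C : Finset V, IsIdCode G ↑C ∧ C.card = n}

/-- For a finite twin-free graph admitting an identifying code,
`χ_rlid(G) ≤ γ_id(G) + 1`. -/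
theorem rlid_le_idCode_add_one {V : Type*} [Fintype V] (G : SimpleGraph V)
    (htf : TwinFree G) (hex : ∃ C : Finset V, IsIdCode G ↑C) :
    rlidChromNum G ≤ idCodeNum G + 1 := by
  -- pick a minimum identifying code
  obtain ⟨C0, hC0⟩ := hex
  have hne : {n : ℕ | ∃ C : Finset V, IsIdCode G ↑C ∧ C.card = n}.Nonempty :=
    ⟨C0.card, C0, hC0, rfl⟩
  obtain ⟨C, hC, hcard⟩ := Nat.sInf_mem hne
  classical
  set k := C.card + 1 with hk
  let e := C.equivFin
  let c : V → Fin k := fun v => if h : v ∈ C then (e ⟨v, h⟩).castSucc else Fin.last _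
  have hcolor : IsRlidColoring G c := by
    intro u v hadj _ heq
    have huv : u ≠ v := hadj.ne
    apply hC.2 u v huv
    have key : ∀ x y : V, x ∈ closedNbhd G x → c '' closedNbhd G x = c '' closedNbhd G y →
        closedNbhd G x ∩ ↑C ⊆ closedNbhd G y ∩ ↑C := by
      intro x y _ hxy z hz
      obtain ⟨hzN, hzC⟩ := hz
      have : c z ∈ c '' closedNbhd G y := by
        rw [← hxy]; exact ⟨z, hzN, rfl⟩
      obtain ⟨w, hwN, hw⟩ := this
      have hzC' : z ∈ C := hzC
      have hwC : w ∈ C := by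
        by_contra hwC
        simp only [c, dif_neg hwC, dif_pos hzC'] at hw
        exact absurd hw.symm (Fin.castSucc_lt_last _).ne
      have : w = z := by
        simp only [c, dif_pos hwC, dif_pos hzC'] at hw
        have := e.injective (Fin.castSucc_injective _ hw)
        exact congrArg Subtype.val this
      exact ⟨this ▸ hwN, hzC⟩
    have h1 : c '' closedNbhd G v = c '' closedNbhd G u := heq.symm
    exact Set.Subset.antisymm
      (key u v (Set.mem_insert _ _) heq) (key v u (Set.mem_insert _ _) h1)
  have : k ∈ {k : ℕ | ∃ c : V → Fin k, IsRlidColoring G c} := ⟨c, hcolor⟩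
  calc rlidChromNum G ≤ k := Nat.sInf_le this
    _ = idCodeNum G + 1 := by rw [hk, hcard]; rfl
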